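/- Let {A_v}_{v∈V} be a non-empty finite collection of events in a probability space, where the index set V is the vertex set of a chordal graph G. For each non-empty J ⊆ V, let B_J := ⋂_{i∈J} A_i ∩ ⋂_{i∉J} complement(A_i), and define α'(G) := max{ c(G[J]) : J ⊆ V, J ≠ ∅, B_J ≠ ∅ } (taking the maximum over the nonempty set of such J when it exists), where G[J] is the subgraph of G induced by J and c denotes the number of connected components. Then Pr(⋃_{v∈V} A_v) ≥ (1/α'(G)) · Σ_{I∈𝒞(G)} (−1)^{|I|−1} · Pr(⋂_{i∈I} A_i). -/

import Mathlib

open MeasureTheory Finset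
open scoped Classical

/-- A graph is chordal if it contains no induced cycle of length four or greater. -/
def SimpleGraph.IsChordal {V : Type*} (G : SimpleGraph V) : Prop :=
  ∀ n : ℕ, 4 ≤ n → ∀ s : Set V, ¬ Nonempty (G.induce s ≃g SimpleGraph.cycleGraph n)

/-- The clique complex of `G`: the collection of all non-empty cliques of `G`. -/
noncomputable def SimpleGraph.cliqueComplex {V : Type*} [Fintype V] (G : SimpleGraph V) :
    Finset (Finset V) :=
  Finset.univ.powerset.filter fun I => I.Nonempty ∧ G.IsClique (I : Set V)

/-- The independence number of `G`: the maximum size of a set of pairwise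
non-adjacent vertices. -/
noncomputable def SimpleGraph.indepNum' {V : Type*} [Fintype V] (G : SimpleGraph V) : ℕ :=
  sSup {n | ∃ s : Finset V, ((s : Set V).Pairwise fun v w => ¬ G.Adj v w) ∧ s.card = n}

namespace SimpleGraph.Walk
variable {V : Type*} {G : SimpleGraph V}


/-- take the first `n` steps of a walk -/
def wtake {u v : V} : (p : G.Walk u v) → (n : ℕ) → G.Walk u (p.getVert n)
  | p, 0 => (Walk.nil : G.Walk u u).copy rfl (p.getVert_zero).symm
  | Walk.nil, n+1 => Walk.nil
  | Walk.cons h q, n+1 => (Walk.cons h (q.wtake n)).copy rfl (q.getVert_cons_succ h).symm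

lemma length_wtake {u v : V} (p : G.Walk u v) (n : ℕ) (hn : n ≤ p.length) :
    (p.wtake n).length = n := by
  induction p generalizing n with
  | nil => simp at hn; subst hn; simp [wtake]
  | cons h q ih =>
    cases n with
    | zero => simp [wtake]
    | succ n => simp only [wtake, length_copy, length_cons]
                rw [ih n (by simpa using hn)]

lemma support_wtake_subset {u v : V} (p : G.Walk u v) (n : ℕ) :
    (p.wtake n).support ⊆ p.support := by
  induction p generalizing n with
  | nil => cases n <;> simp [wtake]
  | cons h q ih =>
    cases n with
    | zero => intro x hx; simp [wtake] at hx; simp [hx]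
    | succ n =>
      intro x hx
      simp only [wtake, support_copy, support_cons, List.mem_cons] at hx
      rcases hx with hx | hx
      · simp [hx]
      · simp [ih n hx]

def wdrop {u v : V} : (p : G.Walk u v) → (n : ℕ) → G.Walk (p.getVert n) v
  | p, 0 => p.copy (getVert_zero p).symm rfl
  | Walk.nil, n+1 => (Walk.nil : G.Walk u u).copy (Walk.getVert_of_length_le _ (by simp)).symm rfl
  | Walk.cons h q, n+1 => ((q.wdrop n).copy rfl rfl).copy (q.getVert_cons_succ h).symm rfl

lemma length_wdrop {u v : V} (p : G.Walk u v) (n : ℕ) :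
    (p.wdrop n).length = p.length - n := by
  induction p generalizing n with
  | nil => cases n <;> simp [wdrop] <;> exact Walk.getVert_of_length_le _ (by simp)
  | cons h q ih =>
    cases n with
    | zero => simp [wdrop]
    | succ n => simp only [wdrop, length_copy, length_cons]; rw [ih n]; omega

lemma support_wdrop_subset {u v : V} (p : G.Walk u v) (n : ℕ) :
    (p.wdrop n).support ⊆ p.support := by
  induction p generalizing n with
  | nil =>
    cases n with
    | zero => simp [wdrop]
    | succ n => exact fun x hx => by simpa [wdrop] using hx
  | cons h q ih =>
    cases n with
    | zero => simp [wdrop]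
    | succ n =>
      intro x hx
      simp only [wdrop, support_copy] at hx
      simp [ih n hx]

/-- getVert is injective on paths -/
lemma IsPath.getVert_injOn' {u v : V} {p : G.Walk u v} (hp : p.IsPath) :
    ∀ i ≤ p.length, ∀ j ≤ p.length, p.getVert i = p.getVert j → i = j := by
  induction p with
  | nil => intro i hi j hj _; simp at hi hj; omega
  | cons h q ih =>
    intro i hi j hj hij
    rw [cons_isPath_iff] at hp
    cases i with
    | zero =>
      cases j with
      | zero => rfl
      | succ j =>
        exfalso
        rw [getVert_zero, getVert_cons_succ] at hij
        exact hp.2 (by rw [mem_support_iff_exists_getVert]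
                       exact ⟨j, hij.symm, by simpa using hj⟩)
    | succ i =>
      cases j with
      | zero =>
        exfalso
        rw [getVert_zero, getVert_cons_succ] at hij
        exact hp.2 (by rw [mem_support_iff_exists_getVert]
                       exact ⟨i, hij, by simpa using hi⟩)
      | succ j =>
        rw [getVert_cons_succ, getVert_cons_succ] at hij
        have := ih hp.1 i (by simpa using hi) j (by simpa using hj) hij
        omega



end SimpleGraph.Walk

namespace ChordalSieve
open SimpleGraph Walk
section
variable {V : Type*} {G : SimpleGraph V}


def ReachIn (G : SimpleGraph V) (J : Finset V) (a b : V) : Prop :=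
  ∃ w : G.Walk a b, ∀ x ∈ w.support, x ∈ J

lemma ReachIn.left_mem {J : Finset V} {a b : V} (h : ReachIn G J a b) : a ∈ J := by
  obtain ⟨w, hw⟩ := h; exact hw a w.start_mem_support

lemma ReachIn.right_mem {J : Finset V} {a b : V} (h : ReachIn G J a b) : b ∈ J := by
  obtain ⟨w, hw⟩ := h; exact hw b w.end_mem_support

lemma ReachIn.refl {J : Finset V} {a : V} (ha : a ∈ J) : ReachIn G J a a :=
  ⟨Walk.nil, by simpa using ha⟩

lemma ReachIn.symm {J : Finset V} {a b : V} (h : ReachIn G J a b) : ReachIn G J b a := by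
  obtain ⟨w, hw⟩ := h
  exact ⟨w.reverse, by simpa using hw⟩

lemma ReachIn.trans {J : Finset V} {a b c : V} (h : ReachIn G J a b)
    (h' : ReachIn G J b c) : ReachIn G J a c := by
  obtain ⟨w, hw⟩ := h; obtain ⟨w', hw'⟩ := h'
  refine ⟨w.append w', fun x hx => ?_⟩
  rw [Walk.mem_support_append_iff] at hx
  exact hx.elim (hw x) (hw' x)

lemma ReachIn.mono {J K : Finset V} (hJK : J ⊆ K) {a b : V} (h : ReachIn G J a b) :
    ReachIn G K a b := by
  obtain ⟨w, hw⟩ := h; exact ⟨w, fun x hx => hJK (hw x hx)⟩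

lemma reach_of_walk {J : Finset V} {a b : V} (w : G.Walk a b)
    (hw : ∀ x ∈ w.support, x ∈ J) (ha : a ∈ J) (hb : b ∈ J) :
    (G.induce (J : Set V)).Reachable ⟨a, by simpa using ha⟩ ⟨b, by simpa using hb⟩ := by
  induction w with
  | nil => rfl
  | @cons x y z h p ih =>
    have hy : y ∈ J := hw y (by simp)
    refine Reachable.trans ?_ (ih (fun t ht => hw t (by simp [ht])) hy hb)
    exact Adj.reachable
      (by exact h : (G.induce (J : Set V)).Adj ⟨x, by simpa using ha⟩ ⟨y, by simpa using hy⟩)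

lemma reachable_induce_iff {J : Finset V} (a b : (J : Set V)) :
    (G.induce (J : Set V)).Reachable a b ↔ ReachIn G J a.1 b.1 := by
  constructor
  · rintro ⟨w⟩
    induction w with
    | nil => exact ReachIn.refl (by simpa using Subtype.coe_prop _)
    | @cons x y z h p ih =>
      refine ReachIn.trans ⟨Walk.cons h Walk.nil, ?_⟩ ih
      intro t ht
      change t ∈ [(x : V), (y : V)] at ht
      simp only [Walk.support_cons, Walk.support_nil, List.mem_cons, List.mem_singleton] at ht
      rcases ht with rfl | rfl | h'
      · exact Subtype.coe_prop x
      · exact Subtype.coe_prop y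
      · simp at h'
  · rintro ⟨w, hw⟩
    have := reach_of_walk w hw (hw a.1 w.start_mem_support) (hw b.1 w.end_mem_support)
    simpa using this

abbrev CC (G : SimpleGraph V) (J : Finset V) := (G.induce (J : Set V)).ConnectedComponent

noncomputable def comp (G : SimpleGraph V) (J : Finset V) (a : V) (ha : a ∈ J) : CC G J :=
  (G.induce (J : Set V)).connectedComponentMk ⟨a, by simpa using ha⟩

lemma comp_eq_comp_iff {J : Finset V} {a b : V} {ha : a ∈ J} {hb : b ∈ J} :
    comp G J a ha = comp G J b hb ↔ ReachIn G J a b := by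
  rw [comp, comp, SimpleGraph.ConnectedComponent.eq]
  exact reachable_induce_iff _ _

lemma exists_comp_rep (c : CC G J) : ∃ (a : V) (ha : a ∈ J), comp G J a ha = c := by
  obtain ⟨⟨a, ha⟩, h⟩ := c.exists_rep
  exact ⟨a, by simpa using ha, h⟩

noncomputable def cmap (G : SimpleGraph V) {J K : Finset V} (h : J ⊆ K) : CC G J → CC G K :=
  SimpleGraph.ConnectedComponent.map
    (SimpleGraph.induceHomOfLE G (by exact_mod_cast h : (J : Set V) ≤ (K : Set V))).toHom

lemma cmap_comp {J K : Finset V} (h : J ⊆ K) (a : V) (ha : a ∈ J) :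
    cmap G h (comp G J a ha) = comp G K a (h ha) := rfl

lemma ReachIn.of_not_through {J : Finset V} {x y v : V} (h : ReachIn G J x y) :
    ReachIn G (J.erase v) x y ∨ ReachIn G J x v := by
  obtain ⟨w, hw⟩ := h
  by_cases hv : v ∈ w.support
  · right
    exact ⟨w.takeUntil v hv, fun t ht => hw t (Walk.support_takeUntil_subset _ _ ht)⟩
  · left
    exact ⟨w, fun t ht => Finset.mem_erase.2 ⟨fun h' => hv (h' ▸ ht), hw t ht⟩⟩

lemma ReachIn.symm' {J : Finset V} {a b : V} (h : ReachIn G J a b) : ReachIn G J b a := by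
  obtain ⟨w, hw⟩ := h
  exact ⟨w.reverse, by simpa using hw⟩

lemma reach_to_nbr_aux {J : Finset V} {v u : V} (w : G.Walk u v) :
    (∀ x ∈ w.support, x ∈ J) → u ∈ J.erase v →
    ∃ x ∈ (J.erase v).filter (G.Adj v), ReachIn G (J.erase v) u x := by
  induction w with
  | nil =>
    intro _ hu
    exact absurd rfl (Finset.mem_erase.1 hu).1
  | @cons x y z hadj p ih =>
    intro hw hu
    by_cases hyv : y = z
    · subst hyv
      exact ⟨x, Finset.mem_filter.2 ⟨hu, hadj.symm⟩, ReachIn.refl hu⟩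
    · have hy : y ∈ J.erase z := Finset.mem_erase.2 ⟨hyv, hw y (by simp)⟩
      obtain ⟨t, ht, hreach⟩ := ih (fun s hs => hw s (by simp [hs])) hy
      refine ⟨t, ht, ?_⟩
      obtain ⟨q, hq⟩ := hreach
      refine ⟨Walk.cons hadj q, fun s hs => ?_⟩
      rcases (by simpa using hs : s = x ∨ s ∈ q.support) with rfl | hs'
      · exact hu
      · exact hq s hs'

lemma reach_to_nbr {J : Finset V} {v u : V} (hu : u ∈ J.erase v)
    (h : ReachIn G J u v) :
    ∃ x ∈ (J.erase v).filter (G.Adj v), ReachIn G (J.erase v) u x := by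
  obtain ⟨w, hw⟩ := h
  exact reach_to_nbr_aux w hw hu

section Counting
variable [Fintype V]

noncomputable instance (J : Finset V) : Fintype (CC G J) := Fintype.ofFinite _

lemma card_CC_erase (J : Finset V) (v : V) (hv : v ∈ J) :
    Fintype.card (CC G (J.erase v)) + 1
      = Fintype.card (CC G J) +
        (univ.filter (fun c' : CC G (J.erase v) =>
          cmap G (J.erase_subset v) c' = comp G J v hv)).card := by
  have hcount : Fintype.card (CC G (J.erase v))
      = ∑ c : CC G J, (univ.filter (fun c' : CC G (J.erase v) =>
          cmap G (J.erase_subset v) c' = c)).card := by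
    rw [← Finset.card_univ]
    exact Finset.card_eq_sum_card_fiberwise (fun x _ => mem_univ _)
  have hfib1 : ∀ c : CC G J, c ≠ comp G J v hv →
      (univ.filter (fun c' : CC G (J.erase v) =>
        cmap G (J.erase_subset v) c' = c)).card = 1 := by
    intro c hc
    rw [Finset.card_eq_one]
    obtain ⟨u, hu, rfl⟩ := exists_comp_rep c
    have huv : u ≠ v := fun h => hc (by subst h; rfl)
    have hu' : u ∈ J.erase v := Finset.mem_erase.2 ⟨huv, hu⟩
    refine ⟨comp G (J.erase v) u hu', ?_⟩
    ext c'
    simp only [Finset.mem_filter, Finset.mem_univ, true_and, Finset.mem_singleton]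
    constructor
    · intro h
      obtain ⟨x, hx, rfl⟩ := exists_comp_rep c'
      rw [cmap_comp] at h
      have hxu : ReachIn G J x u := comp_eq_comp_iff.1 h
      rcases hxu.of_not_through (v := v) with h' | h'
      · exact comp_eq_comp_iff.2 h'
      · exfalso
        have h1 : comp G J x (J.erase_subset v hx) = comp G J v hv :=
          comp_eq_comp_iff.2 h'
        exact hc (by rw [← h, h1])
    · rintro rfl
      rw [cmap_comp]
  have hsplit : ∑ c : CC G J, (univ.filter (fun c' : CC G (J.erase v) =>
          cmap G (J.erase_subset v) c' = c)).card
      = (univ.filter (fun c' : CC G (J.erase v) =>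
          cmap G (J.erase_subset v) c' = comp G J v hv)).card
        + (Fintype.card (CC G J) - 1) := by
    rw [← Finset.add_sum_erase _ _ (mem_univ (comp G J v hv))]
    congr 1
    rw [Finset.sum_congr rfl (fun c hcmem => hfib1 c (Finset.ne_of_mem_erase hcmem)),
      Finset.sum_const, smul_eq_mul, mul_one, Finset.card_erase_of_mem (mem_univ _),
      Finset.card_univ]
  have hpos : 1 ≤ Fintype.card (CC G J) := by
    have : Nonempty (CC G J) := ⟨comp G J v hv⟩
    exact Fintype.card_pos
  rw [hcount, hsplit]
  omega

lemma fiber_eq_image (J : Finset V) (v : V) (hv : v ∈ J) :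
    (univ.filter (fun c' : CC G (J.erase v) =>
        cmap G (J.erase_subset v) c' = comp G J v hv))
      = univ.image (cmap G (Finset.filter_subset (G.Adj v) (J.erase v)) :
          CC G ((J.erase v).filter (G.Adj v)) → CC G (J.erase v)) := by
  ext c'
  simp only [Finset.mem_filter, Finset.mem_univ, true_and, Finset.mem_image]
  constructor
  · intro h
    obtain ⟨u, hu, rfl⟩ := exists_comp_rep c'
    rw [cmap_comp] at h
    have hruv : ReachIn G J u v := comp_eq_comp_iff.1 h
    obtain ⟨x, hx, hreach⟩ := reach_to_nbr hu hruv
    refine ⟨comp G _ x hx, ?_⟩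
    rw [cmap_comp]
    exact comp_eq_comp_iff.2 hreach.symm'
  · rintro ⟨d, _, rfl⟩
    obtain ⟨x, hx, rfl⟩ := exists_comp_rep d
    rw [cmap_comp, cmap_comp]
    refine comp_eq_comp_iff.2 ?_
    have hadj : G.Adj v x := (Finset.mem_filter.1 hx).2
    refine ⟨Walk.cons hadj.symm Walk.nil, fun t ht => ?_⟩
    rcases (by simpa using ht : t = x ∨ t = v) with rfl | rfl
    · exact (J.erase_subset v) (Finset.mem_filter.1 hx).1
    · exact hv

lemma cyc_adj {m : ℕ} (x y : Fin (m + 2)) :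
    (cycleGraph (m + 2)).Adj x y
      ↔ ((x : ℕ) + 1) % (m + 2) = (y : ℕ) ∨ ((y : ℕ) + 1) % (m + 2) = (x : ℕ) := by
  rw [cycleGraph_adj]
  have h1 : ∀ a b : Fin (m + 2), a - b = 1 ↔ ((b : ℕ) + 1) % (m + 2) = (a : ℕ) := by
    intro a b
    have hval : ((1 + b : Fin (m + 2)) : ℕ) = ((b : ℕ) + 1) % (m + 2) := by
      rw [Fin.val_add, Fin.val_one, Nat.add_comm]
    rw [sub_eq_iff_eq_add, eq_comm, Fin.ext_iff, hval]
  rw [h1, h1]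
  exact or_comm

lemma cycle_iso_of_walk {m : ℕ} (hm : 2 ≤ m) {a b v : V} (p : G.Walk a b)
    (hlen : p.length = m)
    (hinj : ∀ i ≤ m, ∀ j ≤ m, p.getVert i = p.getVert j → i = j)
    (hchord : ∀ i ≤ m, ∀ j ≤ m, G.Adj (p.getVert i) (p.getVert j) → (j = i + 1 ∨ i = j + 1))
    (hva : G.Adj v a) (hvb : G.Adj v b)
    (hvmid : ∀ i, 1 ≤ i → i ≤ m - 1 → ¬ G.Adj v (p.getVert i))
    (hvs : v ∉ p.support) :
    Nonempty (G.induce ({x | ∃ i, i ≤ m ∧ p.getVert i = x} ∪ {v} : Set V)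
      ≃g cycleGraph (m + 2)) := by
  set s : Set V := {x | ∃ i, i ≤ m ∧ p.getVert i = x} ∪ {v} with hs
  have hmemsup : ∀ i ≤ m, p.getVert i ∈ p.support := by
    intro i hi
    rw [Walk.mem_support_iff_exists_getVert]
    exact ⟨i, rfl, by omega⟩
  have hvadj : ∀ i ≤ m, (G.Adj v (p.getVert i) ↔ (i = 0 ∨ i = m)) := by
    intro i hi
    constructor
    · intro h
      by_contra hc
      push_neg at hc
      exact hvmid i (by omega) (by omega) h
    · rintro (rfl | rfl)
      · rwa [Walk.getVert_zero]
      · rw [← hlen, Walk.getVert_length]; exact hvb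
  have hadj_iff : ∀ i ≤ m, ∀ j ≤ m,
      (G.Adj (p.getVert i) (p.getVert j) ↔ (j = i + 1 ∨ i = j + 1)) := by
    intro i hi j hj
    constructor
    · exact hchord i hi j hj
    · rintro (rfl | rfl)
      · exact p.adj_getVert_succ (by omega)
      · exact (p.adj_getVert_succ (by omega)).symm
  set F : Fin (m + 2) → ↥s := fun k =>
    if h : (k : ℕ) ≤ m then ⟨p.getVert k, Or.inl ⟨k, h, rfl⟩⟩ else ⟨v, Or.inr rfl⟩ with hF
  have hFval_le : ∀ (k : Fin (m + 2)), (k : ℕ) ≤ m → (F k : V) = p.getVert k := by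
    intro k hk; simp [hF, hk]
  have hFval_gt : ∀ (k : Fin (m + 2)), ¬((k : ℕ) ≤ m) → (F k : V) = v := by
    intro k hk; simp [hF, hk]
  have hFinj : Function.Injective F := by
    intro x y hxy
    have hxy' : (F x : V) = (F y : V) := congrArg _ hxy
    by_cases hx : (x : ℕ) ≤ m <;> by_cases hy : (y : ℕ) ≤ m
    · rw [hFval_le x hx, hFval_le y hy] at hxy'
      exact Fin.ext (hinj _ hx _ hy hxy')
    · rw [hFval_le x hx, hFval_gt y hy] at hxy'
      exact absurd (hxy' ▸ hmemsup _ hx) hvs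
    · rw [hFval_gt x hx, hFval_le y hy] at hxy'
      exact absurd (hxy'.symm ▸ hmemsup _ hy) hvs
    · exact Fin.ext (by have hx2 := x.isLt; have hy2 := y.isLt; omega)
  have hFsurj : Function.Surjective F := by
    rintro ⟨x, hx⟩
    rcases hx with ⟨i, hi, rfl⟩ | rfl
    · exact ⟨⟨i, by omega⟩, Subtype.ext (by rw [hFval_le ⟨i, by omega⟩ (by simpa using hi)])⟩
    · refine ⟨⟨m + 1, by omega⟩, Subtype.ext (by rw [hFval_gt ⟨m+1, by omega⟩ (by simp)])⟩
  refine ⟨SimpleGraph.Iso.symm ⟨Equiv.ofBijective F ⟨hFinj, hFsurj⟩, ?_⟩⟩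
  intro x y
  show (G.induce s).Adj (F x) (F y) ↔ (cycleGraph (m + 2)).Adj x y
  have hind : (G.induce s).Adj (F x) (F y) ↔ G.Adj (F x : V) (F y : V) := Iff.rfl
  rw [hind, cyc_adj]
  have hx2 : (x : ℕ) < m + 2 := x.2
  have hy2 : (y : ℕ) < m + 2 := y.2
  by_cases hx : (x : ℕ) ≤ m <;> by_cases hy : (y : ℕ) ≤ m
  · rw [hFval_le x hx, hFval_le y hy, hadj_iff _ hx _ hy,
      Nat.mod_eq_of_lt (by omega : (x : ℕ) + 1 < m + 2),
      Nat.mod_eq_of_lt (by omega : (y : ℕ) + 1 < m + 2)]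
    omega
  · have hyv : (y : ℕ) = m + 1 := by omega
    have hA : ((x : ℕ) + 1) % (m + 2) = (x : ℕ) + 1 := Nat.mod_eq_of_lt (by omega)
    have hB : ((y : ℕ) + 1) % (m + 2) = 0 := by
      rw [hyv, show m + 1 + 1 = m + 2 from rfl, Nat.mod_self]
    rw [hFval_le x hx, hFval_gt y hy, adj_comm, hvadj _ hx, hA, hB]
    omega
  · have hxv : (x : ℕ) = m + 1 := by omega
    have hA : ((y : ℕ) + 1) % (m + 2) = (y : ℕ) + 1 := Nat.mod_eq_of_lt (by omega)
    have hB : ((x : ℕ) + 1) % (m + 2) = 0 := by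
      rw [hxv, show m + 1 + 1 = m + 2 from rfl, Nat.mod_self]
    rw [hFval_gt x hx, hFval_le y hy, hvadj _ hy, hA, hB]
    omega
  · have hxv : (x : ℕ) = m + 1 := by omega
    have hyv : (y : ℕ) = m + 1 := by omega
    have hB : ((x : ℕ) + 1) % (m + 2) = 0 := by
      rw [hxv, show m + 1 + 1 = m + 2 from rfl, Nat.mod_self]
    have hB' : ((y : ℕ) + 1) % (m + 2) = 0 := by
      rw [hyv, show m + 1 + 1 = m + 2 from rfl, Nat.mod_self]
    rw [hFval_gt x hx, hFval_gt y hy, hB, hB']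
    simp only [SimpleGraph.irrefl, false_iff]
    omega


lemma key_reach (hG : G.IsChordal) {K : Finset V} {v : V} (hv : v ∉ K) :
    ∀ n : ℕ, ∀ a b : V, a ∈ K → b ∈ K → G.Adj v a → G.Adj v b →
    (∃ w : G.Walk a b, (∀ x ∈ w.support, x ∈ K) ∧ w.length ≤ n) →
    ReachIn G (K.filter (G.Adj v)) a b := by
  intro n
  induction n using Nat.strong_induction_on with
  | _ n ih =>
  intro a b ha hb hva hvb ⟨w, hwK, hwlen⟩
  by_cases hab : a = b
  · subst hab; exact ReachIn.refl (Finset.mem_filter.2 ⟨ha, hva⟩)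
  by_cases hadj : G.Adj a b
  · refine ⟨Walk.cons hadj Walk.nil, fun t ht => ?_⟩
    rcases (by simpa using ht : t = a ∨ t = b) with rfl | rfl
    · exact Finset.mem_filter.2 ⟨ha, hva⟩
    · exact Finset.mem_filter.2 ⟨hb, hvb⟩
  -- minimal-length walk
  have hS : ∃ k, ∃ w : G.Walk a b, (∀ x ∈ w.support, x ∈ K) ∧ w.length = k :=
    ⟨w.length, w, hwK, rfl⟩
  set m₀ := sInf {k | ∃ w : G.Walk a b, (∀ x ∈ w.support, x ∈ K) ∧ w.length = k} with hm₀
  obtain ⟨w₀, hw₀K, hw₀len⟩ : ∃ w : G.Walk a b, (∀ x ∈ w.support, x ∈ K) ∧ w.length = m₀ :=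
    Nat.sInf_mem hS
  have hmin : ∀ q : G.Walk a b, (∀ x ∈ q.support, x ∈ K) → m₀ ≤ q.length :=
    fun q hq => Nat.sInf_le ⟨q, hq, rfl⟩
  set p := w₀.bypass with hp
  have hppath : p.IsPath := w₀.bypass_isPath
  have hpK : ∀ x ∈ p.support, x ∈ K := fun x hx => hw₀K x (w₀.support_bypass_subset hx)
  have hplen : p.length = m₀ :=
    le_antisymm (hw₀len ▸ w₀.length_bypass_le) (hmin p hpK)
  have hm₀n : m₀ ≤ n := le_trans (hmin w hwK) hwlen
  have hm2 : 2 ≤ m₀ := by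
    rcases Nat.lt_or_ge m₀ 2 with h | h
    · interval_cases m₀
      · exact absurd (Walk.eq_of_length_eq_zero hplen) hab
      · exfalso
        have h01 : G.Adj (p.getVert 0) (p.getVert 1) := p.adj_getVert_succ (by omega)
        rw [Walk.getVert_zero] at h01
        have : p.getVert 1 = b := by
          have := p.getVert_length
          rwa [hplen] at this
        exact hadj (this ▸ h01)
    · exact h
  have hmemsup : ∀ i ≤ m₀, p.getVert i ∈ p.support := by
    intro i hi
    rw [Walk.mem_support_iff_exists_getVert]
    exact ⟨i, rfl, by omega⟩
  have hinj : ∀ i ≤ m₀, ∀ j ≤ m₀, p.getVert i = p.getVert j → i = j := by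
    rw [← hplen]
    exact hppath.getVert_injOn'
  have hsplice : ∀ i j : ℕ, i + 2 ≤ j → j ≤ m₀ → ¬ G.Adj (p.getVert i) (p.getVert j) := by
    intro i j hij hj hadjij
    have hq : ∀ x ∈ ((p.wtake i).append (Walk.cons hadjij (p.wdrop j))).support, x ∈ K := by
      intro x hx
      rw [Walk.mem_support_append_iff] at hx
      rcases hx with hx | hx
      · exact hpK x (support_wtake_subset p i hx)
      · rcases (by simpa using hx : x = p.getVert i ∨ x ∈ (p.wdrop j).support) with rfl | hx'
        · exact hpK _ (hmemsup i (by omega))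
        · exact hpK x (support_wdrop_subset p j hx')
    have hle := hmin _ hq
    rw [Walk.length_append, Walk.length_cons, length_wtake p i (by omega),
      length_wdrop p j] at hle
    omega
  have hchord : ∀ i ≤ m₀, ∀ j ≤ m₀, G.Adj (p.getVert i) (p.getVert j) →
      (j = i + 1 ∨ i = j + 1) := by
    intro i hi j hj hadjij
    rcases Nat.lt_trichotomy i j with h | h | h
    · by_contra hc
      push_neg at hc
      exact hsplice i j (by omega) hj hadjij
    · exact absurd (h ▸ hadjij) (G.irrefl)
    · by_contra hc
      push_neg at hc
      exact hsplice j i (by omega) hi hadjij.symm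
  by_cases hmid : ∃ i, 1 ≤ i ∧ i ≤ m₀ - 1 ∧ G.Adj v (p.getVert i)
  · obtain ⟨i, hi1, hi2, hvx⟩ := hmid
    have hisup : p.getVert i ∈ p.support := hmemsup i (by omega)
    have hxK : p.getVert i ∈ K := hpK _ hisup
    have htake := p.take_spec hisup
    have hlt : (p.takeUntil _ hisup).length + (p.dropUntil _ hisup).length = m₀ := by
      have := congrArg Walk.length htake
      rwa [Walk.length_append, hplen] at this
    have hlt1 : (p.takeUntil _ hisup).length ≠ 0 := by
      intro h0
      have := Walk.eq_of_length_eq_zero h0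
      have := hinj i (by omega) 0 (by omega) (by rw [Walk.getVert_zero, ← this])
      omega
    have hlt2 : (p.dropUntil _ hisup).length ≠ 0 := by
      intro h0
      have hxb := Walk.eq_of_length_eq_zero h0
      have : p.getVert i = p.getVert m₀ := by
        rw [hxb, ← hplen, Walk.getVert_length]
      have := hinj i (by omega) m₀ (le_refl _) this
      omega
    have hr1 : ReachIn G (K.filter (G.Adj v)) a (p.getVert i) := by
      refine ih (n - 1) (by omega) a _ ha hxK hva hvx
        ⟨p.takeUntil _ hisup, fun t ht => hpK t (p.support_takeUntil_subset hisup ht), by omega⟩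
    have hr2 : ReachIn G (K.filter (G.Adj v)) (p.getVert i) b := by
      refine ih (n - 1) (by omega) _ b hxK hb hvx hvb
        ⟨p.dropUntil _ hisup, fun t ht => hpK t (p.support_dropUntil_subset hisup ht), by omega⟩
    exact hr1.trans hr2
  · exfalso
    push_neg at hmid
    have hvs : v ∉ p.support := fun h => hv (hpK v h)
    have hiso := cycle_iso_of_walk hm2 p hplen hinj hchord hva hvb hmid hvs
    exact hG (m₀ + 2) (by omega) _ hiso

noncomputable def cliquesIn (G : SimpleGraph V) (J : Finset V) : Finset (Finset V) :=
  J.powerset.filter (fun I => I.Nonempty ∧ G.IsClique (I : Set V))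

noncomputable def fsum (G : SimpleGraph V) (J : Finset V) : ℤ :=
  ∑ I ∈ cliquesIn G J, (-1) ^ (I.card - 1)


lemma cliquesIn_empty : cliquesIn G ∅ = ∅ := by
  ext I
  simp [cliquesIn, Finset.nonempty_iff_ne_empty]
  tauto

lemma fsum_empty : fsum G ∅ = 0 := by simp [fsum, cliquesIn_empty]

lemma fsum_rec {J : Finset V} {v : V} (hv : v ∈ J) :
    fsum G J = fsum G (J.erase v) + 1 - fsum G ((J.erase v).filter (G.Adj v)) := by
  classical
  set N := (J.erase v).filter (G.Adj v) with hN
  have hsplit : fsum G J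
      = ∑ I ∈ (cliquesIn G J).filter (fun I => v ∈ I), (-1 : ℤ) ^ (I.card - 1)
        + ∑ I ∈ (cliquesIn G J).filter (fun I => v ∉ I), (-1 : ℤ) ^ (I.card - 1) :=
    (Finset.sum_filter_add_sum_filter_not _ _ _).symm
  have h2 : (cliquesIn G J).filter (fun I => v ∉ I) = cliquesIn G (J.erase v) := by
    ext I
    simp only [cliquesIn, Finset.mem_filter, Finset.mem_powerset, Finset.subset_erase]
    tauto
  have h1 : ∑ I ∈ (cliquesIn G J).filter (fun I => v ∈ I), (-1 : ℤ) ^ (I.card - 1)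
      = ∑ S ∈ N.powerset.filter (fun S : Finset V => G.IsClique (S : Set V)), (-1 : ℤ) ^ S.card := by
    refine Finset.sum_nbij' (fun I => I.erase v) (fun S => insert v S) ?_ ?_ ?_ ?_ ?_
    · intro I hI
      simp only [cliquesIn, Finset.mem_filter, Finset.mem_powerset] at hI
      obtain ⟨⟨hIJ, -, hclique⟩, hvI⟩ := hI
      simp only [Finset.mem_filter, Finset.mem_powerset]
      constructor
      · intro x hx
        rw [Finset.mem_erase] at hx
        refine Finset.mem_filter.2 ⟨Finset.mem_erase.2 ⟨hx.1, hIJ hx.2⟩, ?_⟩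
        exact hclique (by simpa using hvI) (by simpa using hx.2) (Ne.symm hx.1)
      · exact hclique.subset (by simp [Finset.erase_subset])
    · intro S hS
      simp only [Finset.mem_filter, Finset.mem_powerset] at hS
      obtain ⟨hSN, hclique⟩ := hS
      have hvN : v ∉ N := fun h => (Finset.mem_erase.1 (Finset.mem_filter.1 h).1).1 rfl
      have hvS : v ∉ S := fun h => hvN (hSN h)
      simp only [cliquesIn, Finset.mem_filter, Finset.mem_powerset]
      refine ⟨⟨?_, ⟨v, Finset.mem_insert_self v S⟩, ?_⟩, Finset.mem_insert_self v S⟩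
      · intro x hx
        rcases Finset.mem_insert.1 hx with rfl | hx'
        · exact hv
        · exact (J.erase_subset v) (Finset.mem_filter.1 (hSN hx')).1
      · rw [Finset.coe_insert, SimpleGraph.isClique_insert]
        refine ⟨hclique, fun b hb _ => ?_⟩
        exact (Finset.mem_filter.1 (hSN (by simpa using hb))).2
    · intro I hI
      simp only [Finset.mem_filter] at hI
      exact Finset.insert_erase hI.2
    · intro S hS
      simp only [Finset.mem_filter, Finset.mem_powerset] at hS
      have hvN : v ∉ N := fun h => (Finset.mem_erase.1 (Finset.mem_filter.1 h).1).1 rfl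
      exact Finset.erase_insert (fun h => hvN (hS.1 h))
    · intro I hI
      simp only [Finset.mem_filter] at hI
      rw [Finset.card_erase_of_mem hI.2]
  have h3 : ∑ S ∈ N.powerset.filter (fun S : Finset V => G.IsClique (S : Set V)), (-1 : ℤ) ^ S.card
      = 1 - fsum G N := by
    have hmem : (∅ : Finset V) ∈ N.powerset.filter (fun S : Finset V => G.IsClique (S : Set V)) := by
      simp
    rw [← Finset.add_sum_erase _ _ hmem]
    have herase : (N.powerset.filter (fun S : Finset V => G.IsClique (S : Set V))).erase ∅
        = cliquesIn G N := by
      ext S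
      simp only [cliquesIn, Finset.mem_erase, Finset.mem_filter, Finset.mem_powerset,
        Finset.nonempty_iff_ne_empty]
      tauto
    rw [herase]
    have : ∑ S ∈ cliquesIn G N, (-1 : ℤ) ^ S.card = - fsum G N := by
      rw [fsum, ← Finset.sum_neg_distrib]
      refine Finset.sum_congr rfl (fun S hS => ?_)
      have hSne : S.Nonempty := by
        simp only [cliquesIn, Finset.mem_filter] at hS
        exact hS.2.1
      have hc : S.card - 1 + 1 = S.card := Nat.succ_pred_eq_of_pos (Finset.card_pos.2 hSne)
      calc (-1 : ℤ) ^ S.card = (-1) ^ (S.card - 1 + 1) := by rw [hc]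
        _ = -(-1) ^ (S.card - 1) := by rw [pow_succ]; ring
    rw [this, Finset.card_empty, pow_zero]
    ring
  rw [hsplit, h1, h2, h3]
  simp only [fsum]
  ring


lemma cmap_injective_of_chordal (hG : G.IsChordal) (J : Finset V) (v : V) :
    Function.Injective (cmap G (Finset.filter_subset (G.Adj v) (J.erase v)) :
      CC G ((J.erase v).filter (G.Adj v)) → CC G (J.erase v)) := by
  intro d1 d2 h
  obtain ⟨x, hx, rfl⟩ := exists_comp_rep d1
  obtain ⟨y, hy, rfl⟩ := exists_comp_rep d2
  rw [cmap_comp, cmap_comp] at h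
  obtain ⟨w, hw⟩ : ReachIn G (J.erase v) x y := comp_eq_comp_iff.1 h
  have hxm := Finset.mem_filter.1 hx
  have hym := Finset.mem_filter.1 hy
  exact comp_eq_comp_iff.2
    (key_reach hG (Finset.notMem_erase v J) w.length x y hxm.1 hym.1 hxm.2 hym.2
      ⟨w, hw, le_refl _⟩)

lemma ncomp_rec (hG : G.IsChordal) {J : Finset V} {v : V} (hv : v ∈ J) :
    (Fintype.card (CC G J) : ℤ)
      = Fintype.card (CC G (J.erase v)) + 1
        - Fintype.card (CC G ((J.erase v).filter (G.Adj v))) := by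
  have h1 := card_CC_erase (G := G) J v hv
  rw [fiber_eq_image (G := G) J v hv,
    Finset.card_image_of_injective _ (cmap_injective_of_chordal hG J v),
    Finset.card_univ] at h1
  omega

lemma card_CC_empty : Fintype.card (CC G (∅ : Finset V)) = 0 := by
  have : IsEmpty (CC G (∅ : Finset V)) := by
    constructor
    intro c
    obtain ⟨x, hx, -⟩ := exists_comp_rep c
    simp at hx
  exact Fintype.card_eq_zero

lemma fsum_eq_card (hG : G.IsChordal) : ∀ J : Finset V, fsum G J = Fintype.card (CC G J) := by
  intro J
  induction J using Finset.strongInductionOn with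
  | _ J ih =>
  rcases J.eq_empty_or_nonempty with rfl | ⟨v, hv⟩
  · rw [fsum_empty, card_CC_empty]; rfl
  · have h1 : J.erase v ⊂ J := Finset.erase_ssubset hv
    have h2 : (J.erase v).filter (G.Adj v) ⊂ J :=
      lt_of_le_of_lt (Finset.filter_subset _ _) h1
    rw [fsum_rec hv, ih _ h1, ih _ h2]
    have := ncomp_rec hG hv
    omega

end Counting
end
end ChordalSieve

theorem chordal_graph_sieve_lower_sharpened {Ω V : Type*} [MeasurableSpace Ω] [Fintype V]
    [Nonempty V] (μ : Measure Ω) [IsProbabilityMeasure μ]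
    (G : SimpleGraph V) (hG : G.IsChordal)
    (A : V → Set Ω) (hA : ∀ v, MeasurableSet (A v))
    (B : Finset V → Set Ω)
    (hB : ∀ J : Finset V, B J = (⋂ i ∈ J, A i) ∩ ⋂ i ∈ (Jᶜ : Finset V), (A i)ᶜ)
    (hne : ∃ J : Finset V, J.Nonempty ∧ B J ≠ ∅) :
    (μ (⋃ v, A v)).toReal ≥
      (1 / (sSup {c : ℕ | ∃ J : Finset V, J.Nonempty ∧ B J ≠ ∅ ∧
              c = Nat.card (G.induce (J : Set V)).ConnectedComponent} : ℕ)) *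
        ∑ I ∈ G.cliqueComplex, (-1 : ℝ) ^ (I.card - 1) * (μ (⋂ i ∈ I, A i)).toReal := by
  classical
  obtain ⟨J₀, hJ₀ne, hB₀ne⟩ := hne
  set SS : Set ℕ := {c : ℕ | ∃ J : Finset V, J.Nonempty ∧ B J ≠ ∅ ∧
      c = Nat.card (G.induce (J : Set V)).ConnectedComponent} with hSS
  -- basic facts about B
  have hBiff : ∀ (ω : Ω) (J : Finset V), ω ∈ B J ↔ J = univ.filter (fun v => ω ∈ A v) := by
    intro ω J
    rw [hB]
    simp only [Set.mem_inter_iff, Set.mem_iInter, Set.mem_compl_iff, Finset.mem_compl]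
    constructor
    · rintro ⟨h1, h2⟩
      ext u
      simp only [Finset.mem_filter, Finset.mem_univ, true_and]
      exact ⟨fun hu => h1 u hu, fun hu => by_contra fun hc => h2 u hc hu⟩
    · rintro rfl
      exact ⟨fun i hi => (Finset.mem_filter.1 hi).2,
        fun i hi h => hi (Finset.mem_filter.2 ⟨Finset.mem_univ i, h⟩)⟩
  have hBmeas : ∀ J : Finset V, MeasurableSet (B J) := by
    intro J
    rw [hB]
    exact (MeasurableSet.iInter fun i => MeasurableSet.iInter fun _ => hA i).inter
      (MeasurableSet.iInter fun i => MeasurableSet.iInter fun _ => (hA i).compl)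
  have hdisj : ∀ J K : Finset V, J ≠ K → Disjoint (B J) (B K) := by
    intro J K hne'
    rw [Set.disjoint_left]
    intro ω hJ hK
    have h1 := (hBiff ω J).1 hJ
    have h2 := (hBiff ω K).1 hK
    exact hne' (by rw [h1, h2])
  have hμeq : ∀ (s : Finset (Finset V)),
      (μ (⋃ J ∈ s, B J)).toReal = ∑ J ∈ s, (μ (B J)).toReal := by
    intro s
    rw [measure_biUnion_finset (fun J _ K _ h => hdisj J K h) (fun J _ => hBmeas J)]
    exact ENNReal.toReal_sum (fun J _ => measure_ne_top μ _)
  have hInter : ∀ I : Finset V,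
      (⋂ i ∈ I, A i) = ⋃ J ∈ univ.powerset.filter (fun J => I ⊆ J), B J := by
    intro I
    ext ω
    simp only [Set.mem_iInter, Set.mem_iUnion, Finset.mem_filter, Finset.mem_powerset,
      exists_prop]
    constructor
    · intro h
      exact ⟨univ.filter (fun v => ω ∈ A v),
        ⟨Finset.subset_univ _,
          fun i hi => Finset.mem_filter.2 ⟨Finset.mem_univ i, h i hi⟩⟩,
        (hBiff ω _).2 rfl⟩
    · rintro ⟨J, ⟨-, hIJ⟩, hJ⟩
      intro i hi
      have hJω := (hBiff ω J).1 hJ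
      have := hIJ hi
      rw [hJω] at this
      exact (Finset.mem_filter.1 this).2
  have hUnion : (⋃ v, A v) = ⋃ J ∈ univ.powerset.filter (fun J => J.Nonempty), B J := by
    ext ω
    simp only [Set.mem_iUnion, Finset.mem_filter, Finset.mem_powerset, exists_prop]
    constructor
    · rintro ⟨v, hv⟩
      exact ⟨univ.filter (fun v => ω ∈ A v),
        ⟨Finset.subset_univ _, ⟨v, Finset.mem_filter.2 ⟨Finset.mem_univ v, hv⟩⟩⟩,
        (hBiff ω _).2 rfl⟩
    · rintro ⟨J, ⟨-, hJne⟩, hJ⟩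
      obtain ⟨v, hv⟩ := hJne
      have hJω := (hBiff ω J).1 hJ
      rw [hJω] at hv
      exact ⟨v, (Finset.mem_filter.1 hv).2⟩
  -- the sum rearrangement
  have hCCfilter : ∀ J : Finset V,
      G.cliqueComplex.filter (fun I => I ⊆ J) = ChordalSieve.cliquesIn G J := by
    intro J
    ext I
    simp only [SimpleGraph.cliqueComplex, ChordalSieve.cliquesIn, Finset.mem_filter,
      Finset.mem_powerset, Finset.subset_univ, true_and]
    tauto
  have hS : ∑ I ∈ G.cliqueComplex, (-1 : ℝ) ^ (I.card - 1) * (μ (⋂ i ∈ I, A i)).toReal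
      = ∑ J ∈ univ.powerset,
          ((ChordalSieve.fsum G J : ℤ) : ℝ) * (μ (B J)).toReal := by
    have step1 : ∀ I ∈ G.cliqueComplex,
        (-1 : ℝ) ^ (I.card - 1) * (μ (⋂ i ∈ I, A i)).toReal
          = ∑ J ∈ univ.powerset,
              (if I ⊆ J then (-1 : ℝ) ^ (I.card - 1) * (μ (B J)).toReal else 0) := by
      intro I _
      rw [hInter I, hμeq, Finset.mul_sum, ← Finset.sum_filter]
    rw [Finset.sum_congr rfl step1, Finset.sum_comm]
    refine Finset.sum_congr rfl fun J _ => ?_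
    rw [← Finset.sum_filter, hCCfilter J, ChordalSieve.fsum]
    push_cast
    rw [Finset.sum_mul]
  -- bounding
  have hbdd : BddAbove SS := by
    refine ⟨Fintype.card V, fun c hc => ?_⟩
    obtain ⟨J, -, -, rfl⟩ := hc
    calc Nat.card (G.induce (J : Set V)).ConnectedComponent
        ≤ Nat.card (J : Set V) :=
          Nat.card_le_card_of_surjective
            ((G.induce (J : Set V)).connectedComponentMk) (fun c => c.exists_rep)
      _ ≤ Nat.card V := Nat.card_le_card_of_injective _ Subtype.val_injective
      _ = Fintype.card V := Nat.card_eq_fintype_card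
  have hα1 : 1 ≤ sSup SS := by
    obtain ⟨v₀, hv₀⟩ := hJ₀ne
    have hmem : Nat.card (G.induce (J₀ : Set V)).ConnectedComponent ∈ SS :=
      ⟨J₀, ⟨v₀, hv₀⟩, hB₀ne, rfl⟩
    have hpos : 0 < Nat.card (G.induce (J₀ : Set V)).ConnectedComponent := by
      have : Nonempty (G.induce (J₀ : Set V)).ConnectedComponent :=
        ⟨ChordalSieve.comp G J₀ v₀ hv₀⟩
      exact Nat.card_pos
    exact le_trans hpos (le_csSup hbdd hmem)
  have hterm : ∀ J ∈ univ.powerset.filter (fun J : Finset V => J.Nonempty),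
      ((ChordalSieve.fsum G J : ℤ) : ℝ) * (μ (B J)).toReal
        ≤ ((sSup SS : ℕ) : ℝ) * (μ (B J)).toReal := by
    intro J hJ
    have hJne' : J.Nonempty := (Finset.mem_filter.1 hJ).2
    by_cases hBJ : B J = ∅
    · rw [hBJ]
      simp
    · have hle : (Fintype.card (ChordalSieve.CC G J) : ℝ) ≤ ((sSup SS : ℕ) : ℝ) := by
        have hmem : Nat.card (G.induce (J : Set V)).ConnectedComponent ∈ SS :=
          ⟨J, hJne', hBJ, rfl⟩
        have := le_csSup hbdd hmem
        rw [Nat.card_eq_fintype_card] at this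
        exact_mod_cast this
      have := ChordalSieve.fsum_eq_card hG J
      rw [this]
      push_cast
      exact mul_le_mul_of_nonneg_right hle ENNReal.toReal_nonneg
  have hSsplit : ∑ J ∈ univ.powerset,
        ((ChordalSieve.fsum G J : ℤ) : ℝ) * (μ (B J)).toReal
      = ∑ J ∈ univ.powerset.filter (fun J : Finset V => J.Nonempty),
          ((ChordalSieve.fsum G J : ℤ) : ℝ) * (μ (B J)).toReal := by
    rw [← Finset.sum_filter_add_sum_filter_not univ.powerset
      (fun J : Finset V => J.Nonempty)]
    have : ∑ J ∈ univ.powerset.filter (fun J : Finset V => ¬ J.Nonempty),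
        ((ChordalSieve.fsum G J : ℤ) : ℝ) * (μ (B J)).toReal = 0 := by
      refine Finset.sum_eq_zero fun J hJ => ?_
      have : J = ∅ := Finset.not_nonempty_iff_eq_empty.1 (Finset.mem_filter.1 hJ).2
      subst this
      rw [ChordalSieve.fsum_empty]
      simp
    rw [this, add_zero]
  have hT : (μ (⋃ v, A v)).toReal
      = ∑ J ∈ univ.powerset.filter (fun J : Finset V => J.Nonempty), (μ (B J)).toReal := by
    rw [hUnion, hμeq]
  have hSle : ∑ I ∈ G.cliqueComplex, (-1 : ℝ) ^ (I.card - 1) * (μ (⋂ i ∈ I, A i)).toReal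
      ≤ ((sSup SS : ℕ) : ℝ) * (μ (⋃ v, A v)).toReal := by
    rw [hS, hSsplit, hT, Finset.mul_sum]
    exact Finset.sum_le_sum hterm
  have hαpos : (0 : ℝ) < ((sSup SS : ℕ) : ℝ) := by exact_mod_cast hα1
  rw [ge_iff_le]
  calc (1 / ((sSup SS : ℕ) : ℝ)) * ∑ I ∈ G.cliqueComplex,
        (-1 : ℝ) ^ (I.card - 1) * (μ (⋂ i ∈ I, A i)).toReal
      ≤ (1 / ((sSup SS : ℕ) : ℝ)) * (((sSup SS : ℕ) : ℝ) * (μ (⋃ v, A v)).toReal) := by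
        apply mul_le_mul_of_nonneg_left hSle
        positivity
    _ = (μ (⋃ v, A v)).toReal := by
        field_simp
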